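/- Let k ≥ 4 be even, n > k(k+2), and suppose k does not divide n. Then in GP(n,k), the vertices v_{ik} and v_{-ik} for 0 ≤ i ≤ ⌊n/(2k)⌋ all lie in W_{v_0 u_0}, and consequently 2|W_{v_0 u_0}| + |_{u_0}W_{v_0}| ≥ 2n + 2 > 2n, so GP(n,k) is not distance-balanced. -/

import Mathlib

/-- The generalized Petersen graph `GP(n,k)`: vertices are `Sum.inl i` (the outer
vertices `u_i`) and `Sum.inr i` (the inner vertices `v_i`) for `i ∈ ZMod n`, with
edges `u_i u_{i+1}`, `v_i v_{i+k}` and spokes `u_i v_i`. -/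
def genPetersen (n k : ℕ) : SimpleGraph (ZMod n ⊕ ZMod n) :=
  SimpleGraph.fromRel (fun x y =>
    match x, y with
    | Sum.inl i, Sum.inl j => j = i + 1
    | Sum.inr i, Sum.inr j => j = i + (k : ZMod n)
    | Sum.inl i, Sum.inr j => i = j
    | _, _ => False)

/-- `W_{xy}`: the set of vertices strictly closer to `x` than to `y`. -/
def closerSet {V : Type*} (G : SimpleGraph V) (x y : V) : Set V :=
  {w | G.dist w x < G.dist w y}

/-- `_xW_y`: the set of vertices equidistant from `x` and `y`. -/
def eqDistSet {V : Type*} (G : SimpleGraph V) (x y : V) : Set V :=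
  {w | G.dist w x = G.dist w y}

/-- A graph is `ℓ`-distance-balanced if every pair of vertices at distance `ℓ`
is balanced. -/
def IsLDistBalanced {V : Type*} (G : SimpleGraph V) (ℓ : ℕ) : Prop :=
  ∀ x y : V, G.dist x y = ℓ → (closerSet G x y).ncard = (closerSet G y x).ncard

/-- A graph is distance-balanced if every pair of adjacent vertices is balanced. -/
def IsDistBalanced {V : Type*} (G : SimpleGraph V) : Prop :=
  ∀ x y : V, G.Adj x y → (closerSet G x y).ncard = (closerSet G y x).ncard

namespace GP14
open SimpleGraph

variable {n k : ℕ}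

lemma adj_spoke (i : ZMod n) : (genPetersen n k).Adj (Sum.inl i) (Sum.inr i) := by
  simp [genPetersen, SimpleGraph.fromRel_adj]

lemma adj_outer (hn : 4 < n) (i : ZMod n) :
    (genPetersen n k).Adj (Sum.inl i) (Sum.inl (i+1)) := by
  haveI : NeZero n := ⟨by omega⟩
  have h1 : (1 : ZMod n) ≠ 0 := by
    intro h
    have : ((1:ℕ) : ZMod n).val = 1 := ZMod.val_cast_of_lt (by omega)
    rw [Nat.cast_one, h] at this; simp at this
  simp only [genPetersen, SimpleGraph.fromRel_adj]
  refine ⟨?_, Or.inl trivial⟩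
  intro h; rw [Sum.inl.injEq] at h
  exact h1 (by linear_combination -h)

lemma adj_inner (hn : 4 < n) (hk : 0 < k) (hkn : k < n) (i : ZMod n) :
    (genPetersen n k).Adj (Sum.inr i) (Sum.inr (i+(k:ZMod n))) := by
  haveI : NeZero n := ⟨by omega⟩
  have h1 : (k : ZMod n) ≠ 0 := by
    intro h
    rw [ZMod.natCast_eq_zero_iff] at h
    have := Nat.le_of_dvd (by omega) h; omega
  simp only [genPetersen, SimpleGraph.fromRel_adj]
  refine ⟨?_, Or.inl trivial⟩
  intro h; rw [Sum.inr.injEq] at h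
  exact h1 (by linear_combination -h)

lemma exists_walk_outer (hn : 4 < n) (i : ZMod n) (m : ℕ) :
    ∃ p : (genPetersen n k).Walk (Sum.inl i) (Sum.inl (i + (m:ZMod n))), p.length = m := by
  induction m with
  | zero => exact ⟨SimpleGraph.Walk.nil.copy rfl (by simp), by simp⟩
  | succ m ih =>
      obtain ⟨p, hp⟩ := ih
      refine ⟨(p.concat (adj_outer hn (i+(m:ZMod n)))).copy rfl (by push_cast; ring_nf), ?_⟩
      simp [SimpleGraph.Walk.length_concat, hp]

lemma exists_walk_inner (hn : 4 < n) (hk : 0 < k) (hkn : k < n) (i : ZMod n) (m : ℕ) :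
    ∃ p : (genPetersen n k).Walk (Sum.inr i) (Sum.inr (i + ((m*k : ℕ) :ZMod n))), p.length = m := by
  induction m with
  | zero => exact ⟨SimpleGraph.Walk.nil.copy rfl (by simp), by simp⟩
  | succ m ih =>
      obtain ⟨p, hp⟩ := ih
      refine ⟨(p.concat (adj_inner hn hk hkn (i+((m*k:ℕ):ZMod n)))).copy rfl
        (by push_cast; ring_nf), ?_⟩
      simp [SimpleGraph.Walk.length_concat, hp]

end GP14

namespace GP14
open SimpleGraph

variable {n k : ℕ}

lemma exists_walk_outer' (hn : 4 < n) (i : ZMod n) (z : ℤ) :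
    ∃ p : (genPetersen n k).Walk (Sum.inl i) (Sum.inl (i + (z:ZMod n))), p.length = z.natAbs := by
  obtain ⟨m, rfl | rfl⟩ := Int.eq_nat_or_neg z
  · obtain ⟨p, hp⟩ := exists_walk_outer (k := k) hn i m
    exact ⟨p.copy rfl (by push_cast; ring_nf), by simp [hp]⟩
  · obtain ⟨p, hp⟩ := exists_walk_outer (k := k) hn (i - (m : ZMod n)) m
    refine ⟨((p.copy rfl (show Sum.inl (i - (m:ZMod n) + (m:ZMod n)) = Sum.inl i by ring_nf)).reverse).copy rfl (show Sum.inl (i - (m:ZMod n)) = Sum.inl (i + (((-(m:ℤ)) : ℤ) : ZMod n)) by push_cast; ring_nf), ?_⟩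
    simp [hp]

lemma exists_walk_inner' (hn : 4 < n) (hk : 0 < k) (hkn : k < n) (i : ZMod n) (z : ℤ) :
    ∃ p : (genPetersen n k).Walk (Sum.inr i) (Sum.inr (i + ((z*k : ℤ):ZMod n))),
      p.length = z.natAbs := by
  obtain ⟨m, rfl | rfl⟩ := Int.eq_nat_or_neg z
  · obtain ⟨p, hp⟩ := exists_walk_inner hn hk hkn i m
    exact ⟨p.copy rfl (by push_cast; ring_nf), by simp [hp]⟩
  · obtain ⟨p, hp⟩ := exists_walk_inner hn hk hkn (i - ((m*k : ℕ) : ZMod n)) m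
    refine ⟨((p.copy rfl (show Sum.inr (i - ((m*k:ℕ):ZMod n) + ((m*k:ℕ):ZMod n)) = Sum.inr i by ring_nf)).reverse).copy rfl (show Sum.inr (i - ((m*k:ℕ):ZMod n)) = Sum.inr (i + (((-(m:ℤ))*k : ℤ) : ZMod n)) by push_cast; ring_nf), ?_⟩
    simp [hp]

/-- upper bound: distance from `u_j` to `v_0` given a decomposition `j = a k + b`. -/
lemma dist_ul_vr_le (hn : 4 < n) (hk : 0 < k) (hkn : k < n) (j : ZMod n) (a b : ℤ)
    (h : ((a*k + b : ℤ) : ZMod n) = j) :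
    (genPetersen n k).dist (Sum.inl j) (Sum.inr 0) ≤ a.natAbs + b.natAbs + 1 := by
  obtain ⟨p1, hp1⟩ := exists_walk_outer' (k := k) hn j (-b)
  have e1 : j + ((-b : ℤ) : ZMod n) = ((a*k : ℤ) : ZMod n) := by
    rw [← h]; push_cast; ring
  obtain ⟨p3, hp3⟩ := exists_walk_inner' hn hk hkn (((a*k : ℤ) : ZMod n)) (-a)
  have e3 : ((a*k : ℤ) : ZMod n) + ((-a*k : ℤ) : ZMod n) = 0 := by push_cast; ring
  have hle := SimpleGraph.dist_le (((p1.copy rfl (show Sum.inl (j + ((-b : ℤ) : ZMod n)) = Sum.inl ((a*k : ℤ) : ZMod n) by rw [e1])).append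
      (adj_spoke (n := n) (k := k) ((a*k : ℤ) : ZMod n)).toWalk).append
      (p3.copy rfl (show Sum.inr (((a*k:ℤ):ZMod n) + ((-a*k : ℤ) : ZMod n)) = Sum.inr 0 by rw [e3])))
  simp only [SimpleGraph.Walk.length_append, SimpleGraph.Walk.length_copy,
    SimpleGraph.Adj.toWalk, SimpleGraph.Walk.length_cons, SimpleGraph.Walk.length_nil,
    hp1, hp3] at hle
  omega

lemma dist_vr_vr_le (hn : 4 < n) (hk : 0 < k) (hkn : k < n) (a : ℤ) :
    (genPetersen n k).dist (Sum.inr ((a*k : ℤ) : ZMod n)) (Sum.inr 0) ≤ a.natAbs := by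
  obtain ⟨p, hp⟩ := exists_walk_inner' hn hk hkn (((a*k : ℤ) : ZMod n)) (-a)
  have e3 : ((a*k : ℤ) : ZMod n) + ((-a*k : ℤ) : ZMod n) = 0 := by push_cast; ring
  have := SimpleGraph.dist_le (p.copy rfl (by rw [e3]))
  simpa [hp] using this

lemma reach_u0 (hn : 4 < n) (x : ZMod n ⊕ ZMod n) :
    (genPetersen n k).Reachable x (Sum.inl 0) := by
  haveI : NeZero n := ⟨by omega⟩
  have key : ∀ j : ZMod n, (genPetersen n k).Reachable (Sum.inl j) (Sum.inl 0) := by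
    intro j
    obtain ⟨p, _⟩ := exists_walk_outer' (k := k) hn j (-(j.val : ℤ))
    have e : j + ((-(j.val:ℤ) : ℤ) : ZMod n) = 0 := by
      push_cast
      simp [ZMod.natCast_val, ZMod.cast_id]
    exact ⟨p.copy rfl (by rw [e])⟩
  cases x with
  | inl j => exact key j
  | inr j => exact ((adj_spoke j).symm.toWalk.reachable).trans (key j)

end GP14

namespace GP14
open SimpleGraph

variable {n k : ℕ}

/-- Core lower bound: every walk to `u_0` admits a decomposition certificate. -/
lemma walk_lb_aux (hn : 4 < n) : ∀ {x y : ZMod n ⊕ ZMod n}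
    (p : (genPetersen n k).Walk x y), y = Sum.inl 0 →
    ∃ a b : ℤ, ((a*k + b : ℤ) : ZMod n) = Sum.elim id id x ∧
      Sum.elim (fun _ => if a = 0 then 0 else 2) (fun _ => 1) x
        + a.natAbs + b.natAbs ≤ p.length := by
  intro x y p
  induction p with
  | nil => rintro rfl; exact ⟨0, 0, by simp, by simp⟩
  | @cons x y _ h q ih =>
    intro hy
    obtain ⟨a, b, hab, hlen⟩ := ih hy
    rcases x with i | i <;> rcases y with j | j <;>
      simp only [genPetersen, SimpleGraph.fromRel_adj, Sum.elim_inl, Sum.elim_inr,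
        Sum.inl.injEq, Sum.inr.injEq, ne_eq, id_eq] at h hab hlen ⊢
    · -- outer-outer step
      rcases h.2 with hj | hj
      · refine ⟨a, b - 1, by push_cast at hab ⊢; rw [hj] at hab; linear_combination hab, ?_⟩
        have : (b-1).natAbs ≤ b.natAbs + 1 := by omega
        change _ ≤ q.length at hlen; change _ ≤ q.length + 1
        split at hlen <;> split <;> omega
      · refine ⟨a, b + 1, by push_cast at hab ⊢; rw [hj]; linear_combination hab, ?_⟩
        have : (b+1).natAbs ≤ b.natAbs + 1 := by omega
        change _ ≤ q.length at hlen; change _ ≤ q.length + 1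
        split at hlen <;> split <;> omega
    · -- spoke down: x = inl i, y = inr j, i = j
      have hij : i = j := by tauto
      refine ⟨a, b, by rw [hab, hij], ?_⟩
      change _ ≤ q.length at hlen; change _ ≤ q.length + 1
      split <;> omega
    · -- spoke up: x = inr i, y = inl j
      have hij : i = j := by tauto
      refine ⟨a, b, by rw [hab, hij], ?_⟩
      change _ ≤ q.length at hlen; change _ ≤ q.length + 1
      split at hlen <;> omega
    · -- inner-inner step
      rcases h.2 with hj | hj
      · refine ⟨a - 1, b, by push_cast at hab ⊢; rw [hj] at hab; linear_combination hab, ?_⟩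
        have : (a-1).natAbs ≤ a.natAbs + 1 := by omega
        change _ ≤ q.length at hlen; change _ ≤ q.length + 1; omega
      · refine ⟨a + 1, b, by push_cast at hab ⊢; rw [hj]; linear_combination hab, ?_⟩
        have : (a+1).natAbs ≤ a.natAbs + 1 := by omega
        change _ ≤ q.length at hlen; change _ ≤ q.length + 1; omega

lemma walk_lb (hn : 4 < n) {x : ZMod n ⊕ ZMod n}
    (p : (genPetersen n k).Walk x (Sum.inl 0)) :
    ∃ a b : ℤ, ((a*k + b : ℤ) : ZMod n) = Sum.elim id id x ∧
      Sum.elim (fun _ => if a = 0 then 0 else 2) (fun _ => 1) x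
        + a.natAbs + b.natAbs ≤ p.length :=
  walk_lb_aux hn p rfl

end GP14

namespace GP14

variable {n k : ℕ}

/-- cost of reaching displacement `c ≥ 0` using `k`-jumps and unit steps. -/
def hval (k c : ℕ) : ℕ := c / k + min (c % k) (k + 1 - c % k)

lemma hbound (hk : 4 ≤ k) (d a b : ℤ) (h : a * k + b = d) :
    hval k d.natAbs ≤ a.natAbs + b.natAbs := by
  set c := d.natAbs with hc
  set q := c / k with hq
  set r := c % k with hr
  have hcqr : k * q + r = c := Nat.div_add_mod c k
  have hrk : r < k := Nat.mod_lt _ (by omega)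
  set A := a.natAbs with hA
  set B := b.natAbs with hB
  have h1 : c ≤ A * k + B := by
    have := Int.natAbs_add_le (a * k) b
    rw [h] at this
    rw [Int.natAbs_mul] at this
    simpa [Int.natAbs_natCast] using this
  have h2 : A * k ≤ c + B := by
    have hba : a * k = d - b := by linarith
    have := Int.natAbs_sub_le d b
    rw [← hba, Int.natAbs_mul] at this
    simpa [Int.natAbs_natCast] using this
  have hsplit : A ≤ q ∨ q + 1 ≤ A := by omega
  have hmul1 : A ≤ q → A * k + (q - A) * k = q * k := by
    intro hle
    rw [← Nat.add_mul]; congr 1; omega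
  have hmul2 : q + 1 ≤ A → q * k + k + (A - q - 1) * k = A * k := by
    intro hle
    rw [← Nat.succ_mul, ← Nat.add_mul]; congr 1; omega
  have hge1 : q - A ≤ (q - A) * k := Nat.le_mul_of_pos_right _ (by omega)
  have hge2 : A - q - 1 ≤ (A - q - 1) * k := Nat.le_mul_of_pos_right _ (by omega)
  have hge1b : q - A = 0 ∨ k ≤ (q - A) * k := by
    rcases Nat.eq_zero_or_pos (q - A) with h0 | h0
    · exact Or.inl h0
    · exact Or.inr (Nat.le_mul_of_pos_left _ h0)
  have hge2b : A - q - 1 = 0 ∨ k ≤ (A - q - 1) * k := by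
    rcases Nat.eq_zero_or_pos (A - q - 1) with h0 | h0
    · exact Or.inl h0
    · exact Or.inr (Nat.le_mul_of_pos_left _ h0)
  have e1 : A * k = k * A := Nat.mul_comm _ _
  have e2 : q * k = k * q := Nat.mul_comm _ _
  rw [hval, ← hq, ← hr]
  rcases Nat.le_total r (k + 1 - r) with hm | hm
  · rw [min_eq_left hm]
    rcases hsplit with hs | hs
    · have := hmul1 hs; omega
    · have := hmul2 hs; omega
  · rw [min_eq_right hm]
    rcases hsplit with hs | hs
    · have := hmul1 hs; omega
    · have := hmul2 hs; omega

lemma hval_witness (hk : 4 ≤ k) (c : ℕ) :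
    ∃ a b : ℤ, a * k + b = (c : ℤ) ∧ a.natAbs + b.natAbs = hval k c := by
  set q := c / k with hq
  set r := c % k with hr
  have hcqr : k * q + r = c := Nat.div_add_mod c k
  have hrk : r < k := Nat.mod_lt _ (by omega)
  have hz : (k:ℤ) * q + r = c := by exact_mod_cast hcqr
  rcases Nat.le_total r (k + 1 - r) with hm | hm
  · refine ⟨(q : ℤ), (r : ℤ), by linear_combination hz, ?_⟩
    rw [hval, ← hq, ← hr, min_eq_left hm]
    simp [Int.natAbs_natCast]
  · refine ⟨(q : ℤ) + 1, (r : ℤ) - k, by push_cast; linear_combination hz, ?_⟩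
    rw [hval, ← hq, ← hr, min_eq_right hm]
    have h1 : ((q : ℤ) + 1).natAbs = q + 1 := by
      rw [show ((q:ℤ) + 1) = ((q + 1 : ℕ) : ℤ) by push_cast; ring, Int.natAbs_natCast]
    have h2 : ((r : ℤ) - k).natAbs = k - r := by omega
    omega

lemma hval_le₁ (hk : 4 ≤ k) (hke : Even k) {c : ℕ} (h : k + 2 ≤ 2 * c) :
    hval k c ≤ c - 1 := by
  obtain ⟨k', rfl⟩ := hke
  set q := c / (k' + k') with hq
  set r := c % (k' + k') with hr
  have hcqr : (k' + k') * q + r = c := Nat.div_add_mod c (k' + k')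
  have hrk : r < k' + k' := Nat.mod_lt _ (by omega)
  rw [hval, ← hq, ← hr]
  rcases Nat.eq_zero_or_pos q with h0 | h0
  · rcases Nat.le_total r (k' + k' + 1 - r) with hm | hm
    · rw [min_eq_left hm]; omega
    · rw [min_eq_right hm]; omega
  · have hw : (k' + k') * 1 ≤ (k' + k') * q := Nat.mul_le_mul_left _ h0
    have h2q : 2 * q ≤ (k' + k') * q := Nat.mul_le_mul_right q (by omega)
    rcases Nat.le_total r (k' + k' + 1 - r) with hm | hm
    · rw [min_eq_left hm]; omega
    · rw [min_eq_right hm]; omega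

lemma hval_le₂ (hk : 4 ≤ k) (hke : Even k) {c : ℕ} (h : k + 4 ≤ 2 * c) :
    hval k c ≤ c - 2 := by
  obtain ⟨k', rfl⟩ := hke
  set q := c / (k' + k') with hq
  set r := c % (k' + k') with hr
  have hcqr : (k' + k') * q + r = c := Nat.div_add_mod c (k' + k')
  have hrk : r < k' + k' := Nat.mod_lt _ (by omega)
  rw [hval, ← hq, ← hr]
  rcases Nat.eq_zero_or_pos q with h0 | h0
  · rcases Nat.le_total r (k' + k' + 1 - r) with hm | hm
    · rw [min_eq_left hm]; omega
    · rw [min_eq_right hm]; omega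
  · have hw : (k' + k') * 1 ≤ (k' + k') * q := Nat.mul_le_mul_left _ h0
    have h2q : 2 * q ≤ (k' + k') * q := Nat.mul_le_mul_right q (by omega)
    rcases Nat.le_total r (k' + k' + 1 - r) with hm | hm
    · rw [min_eq_left hm]; omega
    · rw [min_eq_right hm]; omega

lemma k_hval_le (hk : 4 ≤ k) (hke : Even k) {c N : ℕ} (hcn : 2 * c ≤ N)
    (hk2 : k * k ≤ N) : k * hval k c ≤ N := by
  obtain ⟨k', rfl⟩ := hke
  set q := c / (k' + k') with hq
  set r := c % (k' + k') with hr
  have hcqr : (k' + k') * q + r = c := Nat.div_add_mod c (k' + k')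
  have hrk : r < k' + k' := Nat.mod_lt _ (by omega)
  rw [hval, ← hq, ← hr, Nat.mul_add]
  have hmin : 2 * min r (k' + k' + 1 - r) ≤ k' + k' := by
    rcases Nat.le_total r (k' + k' + 1 - r) with hm | hm
    · rw [min_eq_left hm]; omega
    · rw [min_eq_right hm]; omega
  have h1 : (k' + k') * min r (k' + k' + 1 - r) ≤ (k' + k') * k' := by
    apply Nat.mul_le_mul_left; omega
  have h2 : (k' + k') * q ≤ c := by
    calc (k' + k') * q ≤ (k' + k') * q + r := Nat.le_add_right _ _
    _ = c := hcqr
  have h3 : (k' + k') * k' + (k' + k') * k' = (k' + k') * (k' + k') := by ring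
  omega

end GP14

namespace GP14

variable {n k : ℕ}

lemma cast_eq_iff [NeZero n] (x : ℤ) (j : ZMod n) :
    ((x : ℤ) : ZMod n) = j ↔ ∃ m : ℤ, x = (j.val : ℤ) + m * n := by
  have hjv : (((j.val : ℤ)) : ZMod n) = j := by
    rw [Int.cast_natCast]
    simp [ZMod.natCast_val, ZMod.cast_id]
  constructor
  · intro h
    have h0 : ((x - (j.val : ℤ) : ℤ) : ZMod n) = 0 := by
      rw [Int.cast_sub, h, hjv, sub_self]
    rw [ZMod.intCast_zmod_eq_zero_iff_dvd] at h0
    obtain ⟨m, hm⟩ := h0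
    exact ⟨m, by linear_combination hm⟩
  · rintro ⟨m, rfl⟩
    rw [Int.cast_add, Int.cast_mul, hjv, Int.cast_natCast, ZMod.natCast_self,
      mul_zero, add_zero]

lemma special_mem (hk : 4 ≤ k) (hn : k * (k + 2) < n) (a : ℤ)
    (ha : a.natAbs ≤ n / (2 * k)) :
    (genPetersen n k).dist (Sum.inr ((a * k : ℤ) : ZMod n)) (Sum.inr 0)
      < (genPetersen n k).dist (Sum.inr ((a * k : ℤ) : ZMod n)) (Sum.inl 0) := by
  have hkk : 4 * (4 + 2) ≤ k * (k + 2) := Nat.mul_le_mul hk (by omega)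
  have hn4 : 4 < n := by omega
  haveI : NeZero n := ⟨by omega⟩
  have hk0 : 0 < k := by omega
  have hkn : k < n := by
    have : k * 1 ≤ k * (k + 2) := Nat.mul_le_mul_left _ (by omega)
    omega
  have hup := dist_vr_vr_le hn4 hk0 hkn a
  obtain ⟨p, hp⟩ := (reach_u0 hn4 (Sum.inr ((a * k : ℤ) : ZMod n))).exists_walk_length_eq_dist
  obtain ⟨a', b', hab, hlen⟩ := walk_lb hn4 p
  simp only [Sum.elim_inr, id_eq] at hab hlen
  -- extract the integer relation
  have hdvd : (n : ℤ) ∣ (a' * k + b' - a * k) := by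
    rw [← ZMod.intCast_zmod_eq_zero_iff_dvd]
    push_cast
    push_cast at hab
    rw [hab]; ring
  obtain ⟨m, hm⟩ := hdvd
  -- now show a.natAbs ≤ a'.natAbs + b'.natAbs
  have hA : (a * (k : ℤ)).natAbs = a.natAbs * k := by
    rw [Int.natAbs_mul, Int.natAbs_natCast]
  have htri1 : (a' * (k:ℤ) + b').natAbs ≤ a'.natAbs * k + b'.natAbs := by
    have := Int.natAbs_add_le (a' * k) b'
    rwa [Int.natAbs_mul, Int.natAbs_natCast] at this
  have htri2 : ((n:ℤ) * m).natAbs ≤ (a' * (k:ℤ) + b').natAbs + (a * (k:ℤ)).natAbs := by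
    have h' : (n : ℤ) * m = (a' * k + b') - a * k := by linear_combination -hm
    rw [h']
    exact Int.natAbs_sub_le _ _
  have hmn : ((n:ℤ) * m).natAbs = n * m.natAbs := by
    rw [Int.natAbs_mul, Int.natAbs_natCast]
  have hn2 : a.natAbs * k + a.natAbs * k ≤ n := by
    have h1 : a.natAbs * (2 * k) ≤ (n / (2 * k)) * (2 * k) :=
      Nat.mul_le_mul_right _ ha
    have h2 : (n / (2 * k)) * (2 * k) ≤ n := Nat.div_mul_le_self n (2 * k)
    have h3 : a.natAbs * (2 * k) = a.natAbs * k + a.natAbs * k := by ring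
    omega
  have hbk : b'.natAbs ≤ b'.natAbs * k := Nat.le_mul_of_pos_right _ hk0
  have key : a.natAbs * k ≤ (a'.natAbs + b'.natAbs) * k := by
    have hdist : (a'.natAbs + b'.natAbs) * k = a'.natAbs * k + b'.natAbs * k :=
      Nat.add_mul _ _ _
    rcases eq_or_ne m 0 with rfl | hm0
    · -- a'k + b' = a k
      have : (a' * (k:ℤ) + b').natAbs = (a * (k:ℤ)).natAbs := by
        have : a' * (k:ℤ) + b' = a * k := by linear_combination hm
        rw [this]
      omega
    · have : 1 ≤ m.natAbs := by omega
      have hnm : n * 1 ≤ n * m.natAbs := Nat.mul_le_mul_left _ this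
      omega
  have hfin : a.natAbs ≤ a'.natAbs + b'.natAbs :=
    Nat.le_of_mul_le_mul_right key hk0
  omega

end GP14

namespace GP14

variable {n k : ℕ}

lemma outer_main (hk : 4 ≤ k) (hke : Even k) (hn : k * (k + 2) < n) (j : ZMod n) (c : ℕ)
    (hc : c = j.val ∨ c + j.val = n) (hc1 : c ≤ j.val) (hc2 : c + j.val ≤ n)
    (hck : k + 2 ≤ 2 * c) :
    (genPetersen n k).dist (Sum.inl j) (Sum.inr 0)
      ≤ (genPetersen n k).dist (Sum.inl j) (Sum.inl 0) ∧
    (k + 4 ≤ 2 * c →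
      (genPetersen n k).dist (Sum.inl j) (Sum.inr 0)
        < (genPetersen n k).dist (Sum.inl j) (Sum.inl 0)) := by
  have hkk : 4 * (4 + 2) ≤ k * (k + 2) := Nat.mul_le_mul hk (by omega)
  have hn4 : 4 < n := by omega
  haveI : NeZero n := ⟨by omega⟩
  have hk0 : 0 < k := by omega
  have hkn : k < n := by
    have : k * 1 ≤ k * (k + 2) := Nat.mul_le_mul_left _ (by omega)
    omega
  have hk2n : k * k ≤ n := by
    have : k * k ≤ k * (k + 2) := Nat.mul_le_mul_left _ (by omega)
    omega
  have hval_lt : j.val < n := ZMod.val_lt j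
  have h2cn : 2 * c ≤ n := by omega
  obtain ⟨W, hWc, hWnc, hWeq⟩ : ∃ W, W ≤ hval k c ∧ W ≤ hval k (n - c) ∧
      (W = hval k c ∨ W = hval k (n - c)) := by
    rcases le_total (hval k c) (hval k (n - c)) with h' | h'
    · exact ⟨hval k c, le_refl _, h', Or.inl rfl⟩
    · exact ⟨hval k (n - c), h', le_refl _, Or.inr rfl⟩
  -- upper bound: dist (u_j, v_0) ≤ W + 1
  have wit : ∀ m : ℕ, m = c ∨ m = n - c →
      ∃ a b : ℤ, ((a * k + b : ℤ) : ZMod n) = j ∧ a.natAbs + b.natAbs = hval k m := by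
    intro m hm
    obtain ⟨a, b, heq, hsum⟩ := hval_witness hk m
    -- either m ≡ j or m ≡ -j as integers mod n
    have hmn : m ≤ n := by omega
    have hcase : (m : ℤ) = (j.val : ℤ) + (0 : ℤ) * n ∨
        -(m : ℤ) = (j.val : ℤ) + (-1 : ℤ) * n := by
      rcases hm with rfl | rfl <;> rcases hc with h' | h'
      · left; push_cast; omega
      · right; push_cast; omega
      · right; push_cast; omega
      · left; push_cast; omega
    rcases hcase with h' | h'
    · refine ⟨a, b, ?_, hsum⟩
      rw [cast_eq_iff]
      exact ⟨0, by rw [heq]; omega⟩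
    · refine ⟨-a, -b, ?_, by omega⟩
      rw [cast_eq_iff]
      exact ⟨-1, by rw [show -a * (k:ℤ) + -b = -(a * k + b) by ring, heq]; omega⟩
  have hup : (genPetersen n k).dist (Sum.inl j) (Sum.inr 0) ≤ W + 1 := by
    rcases hWeq with hmin | hmin
    · obtain ⟨a, b, hj', hs⟩ := wit c (Or.inl rfl)
      have := dist_ul_vr_le hn4 hk0 hkn j a b hj'
      omega
    · obtain ⟨a, b, hj', hs⟩ := wit (n - c) (Or.inr rfl)
      have := dist_ul_vr_le hn4 hk0 hkn j a b hj'
      omega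
  -- lower bound on dist (u_j, u_0)
  have hW1 : W ≤ c - 1 := le_trans hWc (hval_le₁ hk hke hck)
  have hlow : ∀ p : (genPetersen n k).Walk (Sum.inl j) (Sum.inl 0),
      W + 1 ≤ p.length ∧ (k + 4 ≤ 2 * c → W + 2 ≤ p.length) := by
    intro p
    obtain ⟨a, b, hab, hlen⟩ := walk_lb hn4 p
    simp only [Sum.elim_inl, id_eq] at hab hlen
    rcases eq_or_ne a 0 with rfl | ha0
    · -- pure outer walk: length ≥ |b| ≥ c
      simp only [if_pos rfl] at hlen
      obtain ⟨m, hm⟩ := (cast_eq_iff b j).mp (by rw [← hab]; push_cast; ring)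
      have hmd : m * (n:ℤ) = 0 ∨ (n : ℤ) ≤ m * n ∨ m * n ≤ -(n:ℤ) := by
        rcases lt_trichotomy m 0 with h' | h' | h'
        · right; right
          have : m * (n:ℤ) ≤ (-1) * n := by
            apply mul_le_mul_of_nonneg_right (by omega) (by positivity)
          omega
        · left; rw [h', zero_mul]
        · right; left
          have : (1:ℤ) * n ≤ m * n := by
            apply mul_le_mul_of_nonneg_right (by omega) (by positivity)
          omega
      have hbc : c ≤ b.natAbs := by omega
      have hc1' : W + 1 ≤ c := by omega
      constructor
      · omega
      · intro h4
        have : W ≤ c - 2 := le_trans hWc (hval_le₂ hk hke h4)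
        omega
    · -- walk uses inner edges: length ≥ |a| + |b| + 2 ≥ W + 2
      simp only [if_neg ha0] at hlen
      obtain ⟨m, hm⟩ := (cast_eq_iff (a * k + b) j).mp hab
      have hWab : W ≤ a.natAbs + b.natAbs := by
        rcases eq_or_ne m 0 with rfl | hm0
        · -- |a k + b| = j.val
          have hnab : (a * (k:ℤ) + b).natAbs = j.val := by omega
          have hb := hbound hk (a * k + b) a b rfl
          rw [hnab] at hb
          rcases hc with h' | h'
          · rw [← h'] at hb; omega
          · have : j.val = n - c := by omega
            rw [this] at hb
            omega
        · rcases eq_or_ne m (-1) with rfl | hm1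
          · have hnab : (a * (k:ℤ) + b).natAbs = n - j.val := by omega
            have hb := hbound hk (a * k + b) a b rfl
            rw [hnab] at hb
            rcases hc with h' | h'
            · have : n - j.val = n - c := by omega
              rw [this] at hb
              omega
            · have : n - j.val = c := by omega
              rw [this] at hb; omega
          · -- big lift: |a k + b| ≥ n
            have hmd : (n : ℤ) ≤ m * n ∨ m * n ≤ -((n:ℤ)) - (n:ℤ) := by
              rcases lt_trichotomy m 0 with h' | h' | h'
              · right
                have : m * (n:ℤ) ≤ (-2) * n := by
                  apply mul_le_mul_of_nonneg_right (by omega) (by positivity)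
                omega
              · omega
              · left
                have : (1:ℤ) * n ≤ m * n := by
                  apply mul_le_mul_of_nonneg_right (by omega) (by positivity)
                omega
            have hnab : n ≤ (a * (k:ℤ) + b).natAbs := by omega
            have htri : (a * (k:ℤ) + b).natAbs ≤ a.natAbs * k + b.natAbs := by
              have := Int.natAbs_add_le (a * k) b
              rwa [Int.natAbs_mul, Int.natAbs_natCast] at this
            have hbk : b.natAbs ≤ b.natAbs * k := Nat.le_mul_of_pos_right _ hk0
            have hkW : k * W ≤ n := le_trans (Nat.mul_le_mul_left _ hWc)
              (k_hval_le hk hke h2cn hk2n)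
            have hkey : k * W ≤ k * (a.natAbs + b.natAbs) := by
              have hd : k * (a.natAbs + b.natAbs) = a.natAbs * k + b.natAbs * k := by ring
              omega
            exact Nat.le_of_mul_le_mul_left hkey hk0
      constructor
      · omega
      · intro _; omega
  obtain ⟨p, hp⟩ := (reach_u0 hn4 (Sum.inl j)).exists_walk_length_eq_dist
  obtain ⟨hl1, hl2⟩ := hlow p
  constructor
  · omega
  · intro h4; have := hl2 h4; omega

end GP14


theorem stmt_14 (n k : ℕ) (hk : 4 ≤ k) (hke : Even k) (hn : k * (k + 2) < n)
    (hnd : ¬ k ∣ n) :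
    (∀ i : ℕ, i ≤ n / (2 * k) →
      Sum.inr (((i * k : ℕ) : ZMod n)) ∈
        closerSet (genPetersen n k) (Sum.inr 0) (Sum.inl 0) ∧
      Sum.inr (-((i * k : ℕ) : ZMod n)) ∈
        closerSet (genPetersen n k) (Sum.inr 0) (Sum.inl 0)) ∧
    2 * (closerSet (genPetersen n k) (Sum.inr 0) (Sum.inl 0)).ncard
        + (eqDistSet (genPetersen n k) (Sum.inl 0) (Sum.inr 0)).ncard ≥ 2 * n + 2 ∧
    2 * (closerSet (genPetersen n k) (Sum.inr 0) (Sum.inl 0)).ncard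
        + (eqDistSet (genPetersen n k) (Sum.inl 0) (Sum.inr 0)).ncard > 2 * n ∧
    ¬ IsDistBalanced (genPetersen n k) := by
  classical
  have hkk : 4 * (4 + 2) ≤ k * (k + 2) := Nat.mul_le_mul hk (by omega)
  have hn4 : 4 < n := by omega
  haveI : NeZero n := ⟨by omega⟩
  have hk0 : 0 < k := by omega
  have hkn : k < n := by
    have : k * 1 ≤ k * (k + 2) := Nat.mul_le_mul_left _ (by omega)
    omega
  have hkk2 : k * (k + 2) = k * k + 2 * k := by ring
  obtain ⟨K, hK⟩ : ∃ K, K + K = k := ⟨k / 2, by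
    have := Nat.even_iff.mp hke; omega⟩
  have hjv : ∀ j : ZMod n, ((j.val : ℤ) : ZMod n) = j := fun j => by
    rw [Int.cast_natCast]
    simp [ZMod.natCast_val, ZMod.cast_id]
  -- Part 1: the special inner vertices
  have special : ∀ a : ℤ, a.natAbs ≤ n / (2 * k) →
      (Sum.inr ((a * k : ℤ) : ZMod n) : ZMod n ⊕ ZMod n) ∈
        closerSet (genPetersen n k) (Sum.inr 0) (Sum.inl 0) := by
    intro a ha
    exact GP14.special_mem hk hn a ha
  have part1 : ∀ i : ℕ, i ≤ n / (2 * k) →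
      (Sum.inr (((i * k : ℕ) : ZMod n)) : ZMod n ⊕ ZMod n) ∈
        closerSet (genPetersen n k) (Sum.inr 0) (Sum.inl 0) ∧
      (Sum.inr (-((i * k : ℕ) : ZMod n)) : ZMod n ⊕ ZMod n) ∈
        closerSet (genPetersen n k) (Sum.inr 0) (Sum.inl 0) := by
    intro i hi
    constructor
    · have e : ((i * k : ℕ) : ZMod n) = (((i : ℤ) * k : ℤ) : ZMod n) := by push_cast; ring
      rw [e]
      exact special (i : ℤ) (by simpa using hi)
    · have e : -((i * k : ℕ) : ZMod n) = (((-(i : ℤ)) * k : ℤ) : ZMod n) := by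
        push_cast; ring
      rw [e]
      exact special (-(i : ℤ)) (by simpa using hi)
  -- the three auxiliary finsets
  set SAout : Finset (ZMod n ⊕ ZMod n) :=
    (Finset.Icc (K + 2) (n - (K + 2))).image
      (fun t : ℕ => Sum.inl (t : ZMod n)) with hSAout
  set SAin : Finset (ZMod n ⊕ ZMod n) :=
    (Finset.Icc (-(K + 1) : ℤ) ((K + 1) : ℤ)).image
      (fun a : ℤ => Sum.inr ((a * k : ℤ) : ZMod n)) with hSAin
  set SBout : Finset (ZMod n ⊕ ZMod n) :=
    (Finset.Icc (-(K : ℤ)) (K : ℤ)).image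
      (fun z : ℤ => Sum.inl ((z : ℤ) : ZMod n)) with hSBout
  have cardSAout : SAout.card = n - k - 3 := by
    rw [hSAout, Finset.card_image_of_injOn, Nat.card_Icc]
    · omega
    · intro t1 h1 t2 h2 he
      rw [Finset.mem_coe, Finset.mem_Icc] at h1 h2
      simp only [Sum.inl.injEq] at he
      have e1 : ((t1 : ZMod n)).val = t1 := ZMod.val_cast_of_lt (by omega)
      have e2 : ((t2 : ZMod n)).val = t2 := ZMod.val_cast_of_lt (by omega)
      rw [← e1, ← e2, he]
  have castk_inj : ∀ a1 a2 : ℤ, a1.natAbs ≤ K + 1 → a2.natAbs ≤ K + 1 →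
      ((a1 * k : ℤ) : ZMod n) = ((a2 * k : ℤ) : ZMod n) → a1 = a2 := by
    intro a1 a2 h1 h2 he
    have h0 : (((a1 - a2) * k : ℤ) : ZMod n) = 0 := by
      push_cast
      push_cast at he
      linear_combination he
    rw [ZMod.intCast_zmod_eq_zero_iff_dvd] at h0
    by_contra hne
    have hx0 : ((a1 - a2) * (k:ℤ)) ≠ 0 := by
      intro h'
      rcases mul_eq_zero.mp h' with h'' | h''
      · exact hne (by omega)
      · rw [Int.natCast_eq_zero] at h''; omega
    have hdvd : n ∣ ((a1 - a2) * (k:ℤ)).natAbs := by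
      have := Int.natAbs_dvd_natAbs.mpr h0
      rwa [Int.natAbs_natCast] at this
    have hle : n ≤ ((a1 - a2) * (k:ℤ)).natAbs :=
      Nat.le_of_dvd (Int.natAbs_pos.mpr hx0) hdvd
    have habs : ((a1 - a2) * (k:ℤ)).natAbs = (a1 - a2).natAbs * k := by
      rw [Int.natAbs_mul, Int.natAbs_natCast]
    have hbd : (a1 - a2).natAbs ≤ k + 2 := by omega
    have : (a1 - a2).natAbs * k ≤ (k + 2) * k := Nat.mul_le_mul_right _ hbd
    have hcomm : (k + 2) * k = k * (k + 2) := Nat.mul_comm _ _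
    omega
  have cardSAin : SAin.card = k + 3 := by
    rw [hSAin, Finset.card_image_of_injOn, Int.card_Icc]
    · omega
    · intro a1 h1 a2 h2 he
      rw [Finset.mem_coe, Finset.mem_Icc] at h1 h2
      simp only [Sum.inr.injEq] at he
      exact castk_inj a1 a2 (by omega) (by omega) he
  have cardSBout : SBout.card ≤ k + 1 := by
    refine le_trans Finset.card_image_le ?_
    rw [Int.card_Icc]; omega
  -- subset relations
  have SAout_sub : ↑SAout ⊆ closerSet (genPetersen n k) (Sum.inr 0) (Sum.inl 0) := by
    intro w hw
    rw [hSAout, Finset.coe_image, Set.mem_image] at hw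
    obtain ⟨t, ht, rfl⟩ := hw
    rw [Finset.mem_coe, Finset.mem_Icc] at ht
    have hval : ((t : ZMod n)).val = t := ZMod.val_cast_of_lt (by omega)
    simp only [closerSet, Set.mem_setOf_eq]
    rcases le_total (2 * t) n with h2 | h2
    · exact (GP14.outer_main hk hke hn _ t (Or.inl hval.symm) (by omega) (by omega)
        (by omega)).2 (by omega)
    · exact (GP14.outer_main hk hke hn _ (n - t) (Or.inr (by omega)) (by omega)
        (by omega) (by omega)).2 (by omega)
  have hKdiv : K + 1 ≤ n / (2 * k) := by
    rw [Nat.le_div_iff_mul_le (by omega)]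
    have h1 : (K + 1) * (2 * k) = (K + K) * k + 2 * k := by ring
    have h2 : (K + K) * k = k * k := by rw [hK]
    omega
  have SAin_sub : ↑SAin ⊆ closerSet (genPetersen n k) (Sum.inr 0) (Sum.inl 0) := by
    intro w hw
    rw [hSAin, Finset.coe_image, Set.mem_image] at hw
    obtain ⟨a, ha, rfl⟩ := hw
    rw [Finset.mem_coe, Finset.mem_Icc] at ha
    exact special a (by omega)
  have SBout_cover : ∀ j : ZMod n,
      (Sum.inl j : ZMod n ⊕ ZMod n) ∈ closerSet (genPetersen n k) (Sum.inl 0) (Sum.inr 0) →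
      (Sum.inl j : ZMod n ⊕ ZMod n) ∈ SBout := by
    intro j hj
    simp only [closerSet, Set.mem_setOf_eq] at hj
    by_contra hns
    have hv1 : K + 1 ≤ j.val := by
      by_contra h'
      refine hns ?_
      rw [hSBout, Finset.mem_image]
      exact ⟨(j.val : ℤ), Finset.mem_Icc.mpr (by omega), by rw [Sum.inl.injEq]; exact hjv j⟩
    have hv2 : K + 1 ≤ n - j.val := by
      by_contra h'
      refine hns ?_
      rw [hSBout, Finset.mem_image]
      have hvlt : j.val < n := ZMod.val_lt j
      refine ⟨(j.val : ℤ) - n, Finset.mem_Icc.mpr (by omega), ?_⟩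
      rw [Sum.inl.injEq, Int.cast_sub, hjv, Int.cast_natCast, ZMod.natCast_self, sub_zero]
    have hvlt : j.val < n := ZMod.val_lt j
    rcases le_total (2 * j.val) n with h2 | h2
    · have := (GP14.outer_main hk hke hn j j.val (Or.inl rfl) le_rfl (by omega)
        (by omega)).1
      omega
    · have := (GP14.outer_main hk hke hn j (n - j.val) (Or.inr (by omega)) (by omega)
        (by omega) (by omega)).1
      omega
  -- partition identity
  have hpart : (closerSet (genPetersen n k) (Sum.inr 0) (Sum.inl 0)).ncard
      + (closerSet (genPetersen n k) (Sum.inl 0) (Sum.inr 0)).ncard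
      + (eqDistSet (genPetersen n k) (Sum.inl 0) (Sum.inr 0)).ncard = 2 * n := by
    have d1 : Disjoint (closerSet (genPetersen n k) (Sum.inr 0) (Sum.inl 0))
        (closerSet (genPetersen n k) (Sum.inl 0) (Sum.inr 0)) := by
      rw [Set.disjoint_left]
      intro w h1 h2
      simp only [closerSet, Set.mem_setOf_eq] at h1 h2
      omega
    have d2 : Disjoint (closerSet (genPetersen n k) (Sum.inr 0) (Sum.inl 0)
        ∪ closerSet (genPetersen n k) (Sum.inl 0) (Sum.inr 0))
        (eqDistSet (genPetersen n k) (Sum.inl 0) (Sum.inr 0)) := by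
      rw [Set.disjoint_left]
      intro w h1 h2
      simp only [closerSet, eqDistSet, Set.mem_union, Set.mem_setOf_eq] at h1 h2
      omega
    have huniv : closerSet (genPetersen n k) (Sum.inr 0) (Sum.inl 0)
        ∪ closerSet (genPetersen n k) (Sum.inl 0) (Sum.inr 0)
        ∪ eqDistSet (genPetersen n k) (Sum.inl 0) (Sum.inr 0) = Set.univ := by
      ext w
      simp only [closerSet, eqDistSet, Set.mem_union, Set.mem_setOf_eq, Set.mem_univ,
        iff_true]
      omega
    rw [← Set.ncard_union_eq d1, ← Set.ncard_union_eq d2, huniv, Set.ncard_univ,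
      Nat.card_eq_fintype_card, Fintype.card_sum, ZMod.card]
    omega
  have hAcard : n ≤ (closerSet (genPetersen n k) (Sum.inr 0) (Sum.inl 0)).ncard := by
    have hdisj : Disjoint SAout SAin := by
      rw [Finset.disjoint_left]
      intro w hw1 hw2
      rw [hSAout, Finset.mem_image] at hw1
      rw [hSAin, Finset.mem_image] at hw2
      obtain ⟨t, _, rfl⟩ := hw1
      obtain ⟨a, _, ha⟩ := hw2
      exact absurd ha (by simp)
    have hsub : ↑(SAout ∪ SAin) ⊆ closerSet (genPetersen n k) (Sum.inr 0) (Sum.inl 0) := by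
      rw [Finset.coe_union]
      exact Set.union_subset SAout_sub SAin_sub
    calc n = SAout.card + SAin.card := by omega
      _ = (SAout ∪ SAin).card := (Finset.card_union_of_disjoint hdisj).symm
      _ = (↑(SAout ∪ SAin) : Set (ZMod n ⊕ ZMod n)).ncard := (Set.ncard_coe_finset _).symm
      _ ≤ _ := Set.ncard_le_ncard hsub (Set.toFinite _)
  have hBcard : (closerSet (genPetersen n k) (Sum.inl 0) (Sum.inr 0)).ncard ≤ n - 2 := by
    have hSAin_range : ↑SAin ⊆ Set.range (Sum.inr : ZMod n → ZMod n ⊕ ZMod n) := by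
      intro w hw
      rw [hSAin, Finset.coe_image, Set.mem_image] at hw
      obtain ⟨a, _, rfl⟩ := hw
      exact ⟨_, rfl⟩
    have hrange : (Set.range (Sum.inr : ZMod n → ZMod n ⊕ ZMod n)).ncard = n := by
      rw [← Set.image_univ, Set.ncard_image_of_injective _ Sum.inr_injective,
        Set.ncard_univ, Nat.card_eq_fintype_card, ZMod.card]
    have hcover : closerSet (genPetersen n k) (Sum.inl 0) (Sum.inr 0) ⊆
        ↑SBout ∪ (Set.range (Sum.inr : ZMod n → ZMod n ⊕ ZMod n) \ ↑SAin) := by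
      intro w hw
      match w with
      | Sum.inl j => exact Or.inl (SBout_cover j hw)
      | Sum.inr j =>
        refine Or.inr ⟨⟨j, rfl⟩, fun hmem => ?_⟩
        have h1 := SAin_sub hmem
        simp only [closerSet, Set.mem_setOf_eq] at h1 hw
        omega
    have h1 := Set.ncard_le_ncard hcover (Set.toFinite _)
    have h2 := Set.ncard_union_le (↑SBout : Set (ZMod n ⊕ ZMod n))
      (Set.range (Sum.inr : ZMod n → ZMod n ⊕ ZMod n) \ ↑SAin)
    have h3 : (Set.range (Sum.inr : ZMod n → ZMod n ⊕ ZMod n) \ ↑SAin).ncard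
        = n - (k + 3) := by
      rw [Set.ncard_diff hSAin_range, hrange, Set.ncard_coe_finset, cardSAin]
    have h4 : (↑SBout : Set (ZMod n ⊕ ZMod n)).ncard ≤ k + 1 := by
      rw [Set.ncard_coe_finset]; exact cardSBout
    omega
  refine ⟨part1, by omega, by omega, ?_⟩
  intro hdb
  have h0 := hdb (Sum.inr 0) (Sum.inl 0) ((GP14.adj_spoke 0).symm)
  omega
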